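/- arXiv:1310.2304 — 2 statements merged into one kernel-verified Lean document; each statement's English description precedes it below -/
import Mathlib

section
/- Every lattice point P in the cone L(B_10) = {(l_1,...,l_11) ∈ Z^11 : l_i ≥ 0 and Σ l_i e_i = 0}, where e_1,...,e_11 are the given ray generators of the fan of F_10, has a unique representation P = k·f_1 + l·f_2 + m·f_3 with k,l,m ∈ Z_{≥0}, where f_1=(1,1,1,2,1,2,1,0,0,0,1), f_2=(1,0,1,2,2,2,1,0,0,1,0), f_3=(1,1,1,1,1,2,1,1,1,0,0). -/
namespace Stmt0

def e : Fin 11 → Fin 8 → ℤ :=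
  ![![-1,-1,-1,0,-1,0,0,0], ![0,0,0,-1,0,1,0,0], ![0,0,0,-1,1,0,0,0],
    ![0,0,0,0,0,0,0,1], ![0,0,0,0,0,1,1,0], ![0,0,0,1,0,-1,-1,-1],
    ![0,0,1,0,0,0,0,0], ![0,1,0,0,0,0,0,0], ![1,0,0,0,0,0,1,1],
    ![1,1,0,-1,0,0,0,0], ![1,1,0,0,0,0,1,0]]

def f : Fin 3 → Fin 11 → ℤ :=
  ![![1,1,1,2,1,2,1,0,0,0,1], ![1,0,1,2,2,2,1,0,0,1,0], ![1,1,1,1,1,2,1,1,1,0,0]]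

set_option maxHeartbeats 4000000

/-- Every lattice point in the cone `L(B₁₀)` has a unique representation as a
nonnegative integer combination of `f 0`, `f 1`, `f 2`. -/
theorem unique_representation_LB10 (P : Fin 11 → ℤ)
    (hnonneg : ∀ i, 0 ≤ P i) (hrel : ∑ i, P i • e i = 0) :
    ∃! t : Fin 3 → ℕ, P = ∑ j, (t j : ℤ) • f j := by
  have h8 := hnonneg 8
  have h9 := hnonneg 9
  have h10 := hnonneg 10
  have hc : ∀ k : Fin 8, ∑ i, P i * e i k = 0 := by
    intro k
    have := congrFun hrel k
    simpa [Finset.sum_apply] using this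
  have h0 : P 0 * (-1) + (P 1 * 0 + (P 2 * 0 + (P 3 * 0 + (P 4 * 0 + (P 5 * 0 + (P 6 * 0 + (P 7 * 0 + (P 8 * 1 + (P 9 * 1 + (P 10 * 1 + 0)))))))))) = 0 := hc 0
  have h1 : P 0 * (-1) + (P 1 * 0 + (P 2 * 0 + (P 3 * 0 + (P 4 * 0 + (P 5 * 0 + (P 6 * 0 + (P 7 * 1 + (P 8 * 0 + (P 9 * 1 + (P 10 * 1 + 0)))))))))) = 0 := hc 1
  have h2 : P 0 * (-1) + (P 1 * 0 + (P 2 * 0 + (P 3 * 0 + (P 4 * 0 + (P 5 * 0 + (P 6 * 1 + (P 7 * 0 + (P 8 * 0 + (P 9 * 0 + (P 10 * 0 + 0)))))))))) = 0 := hc 2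
  have h3 : P 0 * 0 + (P 1 * (-1) + (P 2 * (-1) + (P 3 * 0 + (P 4 * 0 + (P 5 * 1 + (P 6 * 0 + (P 7 * 0 + (P 8 * 0 + (P 9 * (-1) + (P 10 * 0 + 0)))))))))) = 0 := hc 3
  have h4 : P 0 * (-1) + (P 1 * 0 + (P 2 * 1 + (P 3 * 0 + (P 4 * 0 + (P 5 * 0 + (P 6 * 0 + (P 7 * 0 + (P 8 * 0 + (P 9 * 0 + (P 10 * 0 + 0)))))))))) = 0 := hc 4
  have h5 : P 0 * 0 + (P 1 * 1 + (P 2 * 0 + (P 3 * 0 + (P 4 * 1 + (P 5 * (-1) + (P 6 * 0 + (P 7 * 0 + (P 8 * 0 + (P 9 * 0 + (P 10 * 0 + 0)))))))))) = 0 := hc 5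
  have h6 : P 0 * 0 + (P 1 * 0 + (P 2 * 0 + (P 3 * 0 + (P 4 * 1 + (P 5 * (-1) + (P 6 * 0 + (P 7 * 0 + (P 8 * 1 + (P 9 * 0 + (P 10 * 1 + 0)))))))))) = 0 := hc 6
  have h7 : P 0 * 0 + (P 1 * 0 + (P 2 * 0 + (P 3 * 1 + (P 4 * 0 + (P 5 * (-1) + (P 6 * 0 + (P 7 * 0 + (P 8 * 1 + (P 9 * 0 + (P 10 * 0 + 0)))))))))) = 0 := hc 7
  simp only [mul_zero, mul_one, add_zero, mul_neg] at h0 h1 h2 h3 h4 h5 h6 h7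
  refine ⟨![(P 10).toNat, (P 9).toNat, (P 8).toNat], ?_, ?_⟩
  · funext i
    simp only [Fin.sum_univ_three, Finset.sum_apply, Pi.add_apply, Pi.smul_apply,
      smul_eq_mul]
    fin_cases i
    · show P 0 = ((P 10).toNat : ℤ) * 1 + ((P 9).toNat : ℤ) * 1 + ((P 8).toNat : ℤ) * 1; omega
    · show P 1 = ((P 10).toNat : ℤ) * 1 + ((P 9).toNat : ℤ) * 0 + ((P 8).toNat : ℤ) * 1; omega
    · show P 2 = ((P 10).toNat : ℤ) * 1 + ((P 9).toNat : ℤ) * 1 + ((P 8).toNat : ℤ) * 1; omega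
    · show P 3 = ((P 10).toNat : ℤ) * 2 + ((P 9).toNat : ℤ) * 2 + ((P 8).toNat : ℤ) * 1; omega
    · show P 4 = ((P 10).toNat : ℤ) * 1 + ((P 9).toNat : ℤ) * 2 + ((P 8).toNat : ℤ) * 1; omega
    · show P 5 = ((P 10).toNat : ℤ) * 2 + ((P 9).toNat : ℤ) * 2 + ((P 8).toNat : ℤ) * 2; omega
    · show P 6 = ((P 10).toNat : ℤ) * 1 + ((P 9).toNat : ℤ) * 1 + ((P 8).toNat : ℤ) * 1; omega
    · show P 7 = ((P 10).toNat : ℤ) * 0 + ((P 9).toNat : ℤ) * 0 + ((P 8).toNat : ℤ) * 1; omega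
    · show P 8 = ((P 10).toNat : ℤ) * 0 + ((P 9).toNat : ℤ) * 0 + ((P 8).toNat : ℤ) * 1; omega
    · show P 9 = ((P 10).toNat : ℤ) * 0 + ((P 9).toNat : ℤ) * 1 + ((P 8).toNat : ℤ) * 0; omega
    · show P 10 = ((P 10).toNat : ℤ) * 1 + ((P 9).toNat : ℤ) * 0 + ((P 8).toNat : ℤ) * 0; omega
  · intro t ht
    have hcoord : ∀ i : Fin 11, P i = (t 0 : ℤ) * f 0 i + (t 1 : ℤ) * f 1 i + (t 2 : ℤ) * f 2 i := by
      intro i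
      have := congrFun ht i
      simpa [Fin.sum_univ_three, Finset.sum_apply] using this
    have e8 := hcoord 8
    have e9 := hcoord 9
    have e10 := hcoord 10
    rw [show f 0 (8 : Fin 11) = 0 from rfl, show f 1 (8 : Fin 11) = 0 from rfl,
      show f 2 (8 : Fin 11) = 1 from rfl] at e8
    rw [show f 0 (9 : Fin 11) = 0 from rfl, show f 1 (9 : Fin 11) = 1 from rfl,
      show f 2 (9 : Fin 11) = 0 from rfl] at e9
    rw [show f 0 (10 : Fin 11) = 1 from rfl, show f 1 (10 : Fin 11) = 0 from rfl,
      show f 2 (10 : Fin 11) = 0 from rfl] at e10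
    funext j
    fin_cases j
    · show t 0 = (P 10).toNat; omega
    · show t 1 = (P 9).toNat; omega
    · show t 2 = (P 8).toNat; omega

end Stmt0
end

section
/- Every element P of L(B_25) ⊂ Z^18 = Z^9 × Z^9 can be written in a unique way as P = (k g_1 + l g_2 + m g_3, n g_1 + o g_2 + p g_3) with nonnegative integers k,l,m,n,o,p satisfying k+l+m = n+o+p, where g_1=(1,0,0,1,1,0,1,0,1), g_2=(1,1,0,0,0,1,1,0,1), g_3=(1,1,1,0,0,0,0,1,1). -/
namespace Stmt15

def e : Fin 18 → Fin 13 → ℤ :=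
  ![![-1,-1,-1,-1,-1,-1,-1,-1,-1,-1,-1,-1,-1],
    ![0,0,0,0,0,0,0,0,0,0,0,0,1],
    ![0,0,0,0,0,0,0,0,0,0,0,1,0],
    ![0,0,0,0,0,0,0,0,0,0,1,0,0],
    ![0,0,0,0,0,0,0,0,0,1,0,0,1],
    ![0,0,0,0,0,0,0,0,0,1,1,0,0],
    ![0,0,0,0,0,0,0,0,1,0,0,1,0],
    ![0,0,0,0,0,0,0,0,1,1,1,0,0],
    ![0,0,0,0,0,0,0,1,0,0,0,0,0],
    ![0,0,0,0,0,0,1,0,0,0,0,0,0],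
    ![0,0,0,0,0,1,0,0,0,0,0,0,0],
    ![0,0,0,0,1,0,0,0,0,0,0,0,0],
    ![0,0,0,1,0,0,0,0,0,0,0,0,0],
    ![0,0,1,0,0,1,0,0,0,0,0,0,0],
    ![0,0,1,1,0,0,0,0,0,0,0,0,0],
    ![0,1,0,0,1,0,0,0,0,0,0,0,0],
    ![0,1,1,1,0,0,0,0,0,0,0,0,0],
    ![1,0,0,0,0,0,0,0,0,0,0,0,0]]

def g : Fin 3 → Fin 9 → ℤ :=
  ![![1,0,0,1,1,0,1,0,1], ![1,1,0,0,0,1,1,0,1], ![1,1,1,0,0,0,0,1,1]]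

lemma sum18 (f : Fin 18 → ℤ) : ∑ i, f i = f 0 + f 1 + f 2 + f 3 + f 4 + f 5 + f 6 + f 7 + f 8 + f 9 + f 10 + f 11 + f 12 + f 13 + f 14 + f 15 + f 16 + f 17 := by
  norm_num [Fin.sum_univ_succ, Fin.succ]
  simp only [add_assoc]
  rfl

lemma app0 (A B : Fin 9 → ℤ) : Fin.append A B (0:Fin 18) = A (0:Fin 9) := rfl
lemma app1 (A B : Fin 9 → ℤ) : Fin.append A B (1:Fin 18) = A (1:Fin 9) := rfl
lemma app2 (A B : Fin 9 → ℤ) : Fin.append A B (2:Fin 18) = A (2:Fin 9) := rfl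
lemma app3 (A B : Fin 9 → ℤ) : Fin.append A B (3:Fin 18) = A (3:Fin 9) := rfl
lemma app4 (A B : Fin 9 → ℤ) : Fin.append A B (4:Fin 18) = A (4:Fin 9) := rfl
lemma app5 (A B : Fin 9 → ℤ) : Fin.append A B (5:Fin 18) = A (5:Fin 9) := rfl
lemma app6 (A B : Fin 9 → ℤ) : Fin.append A B (6:Fin 18) = A (6:Fin 9) := rfl
lemma app7 (A B : Fin 9 → ℤ) : Fin.append A B (7:Fin 18) = A (7:Fin 9) := rfl
lemma app8 (A B : Fin 9 → ℤ) : Fin.append A B (8:Fin 18) = A (8:Fin 9) := rfl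
lemma app9 (A B : Fin 9 → ℤ) : Fin.append A B (9:Fin 18) = B (0:Fin 9) := rfl
lemma app10 (A B : Fin 9 → ℤ) : Fin.append A B (10:Fin 18) = B (1:Fin 9) := rfl
lemma app11 (A B : Fin 9 → ℤ) : Fin.append A B (11:Fin 18) = B (2:Fin 9) := rfl
lemma app12 (A B : Fin 9 → ℤ) : Fin.append A B (12:Fin 18) = B (3:Fin 9) := rfl
lemma app13 (A B : Fin 9 → ℤ) : Fin.append A B (13:Fin 18) = B (4:Fin 9) := rfl
lemma app14 (A B : Fin 9 → ℤ) : Fin.append A B (14:Fin 18) = B (5:Fin 9) := rfl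
lemma app15 (A B : Fin 9 → ℤ) : Fin.append A B (15:Fin 18) = B (6:Fin 9) := rfl
lemma app16 (A B : Fin 9 → ℤ) : Fin.append A B (16:Fin 18) = B (7:Fin 9) := rfl
lemma app17 (A B : Fin 9 → ℤ) : Fin.append A B (17:Fin 18) = B (8:Fin 9) := rfl

lemma v0 (a0 a1 a2 a3 a4 a5 a6 a7 a8 : ℤ) : ![a0,a1,a2,a3,a4,a5,a6,a7,a8] (0:Fin 9) = a0 := rfl
lemma v1 (a0 a1 a2 a3 a4 a5 a6 a7 a8 : ℤ) : ![a0,a1,a2,a3,a4,a5,a6,a7,a8] (1:Fin 9) = a1 := rfl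
lemma v2 (a0 a1 a2 a3 a4 a5 a6 a7 a8 : ℤ) : ![a0,a1,a2,a3,a4,a5,a6,a7,a8] (2:Fin 9) = a2 := rfl
lemma v3 (a0 a1 a2 a3 a4 a5 a6 a7 a8 : ℤ) : ![a0,a1,a2,a3,a4,a5,a6,a7,a8] (3:Fin 9) = a3 := rfl
lemma v4 (a0 a1 a2 a3 a4 a5 a6 a7 a8 : ℤ) : ![a0,a1,a2,a3,a4,a5,a6,a7,a8] (4:Fin 9) = a4 := rfl
lemma v5 (a0 a1 a2 a3 a4 a5 a6 a7 a8 : ℤ) : ![a0,a1,a2,a3,a4,a5,a6,a7,a8] (5:Fin 9) = a5 := rfl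
lemma v6 (a0 a1 a2 a3 a4 a5 a6 a7 a8 : ℤ) : ![a0,a1,a2,a3,a4,a5,a6,a7,a8] (6:Fin 9) = a6 := rfl
lemma v7 (a0 a1 a2 a3 a4 a5 a6 a7 a8 : ℤ) : ![a0,a1,a2,a3,a4,a5,a6,a7,a8] (7:Fin 9) = a7 := rfl
lemma v8 (a0 a1 a2 a3 a4 a5 a6 a7 a8 : ℤ) : ![a0,a1,a2,a3,a4,a5,a6,a7,a8] (8:Fin 9) = a8 := rfl

lemma w2 (a b c : ℕ) : ![a,b,c] (2:Fin 3) = c := rfl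

lemma gsum (c : Fin 3 → ℕ) : (∑ i, (c i : ℤ) • g i) =
    ![(c 0:ℤ)+c 1+c 2, (c 1:ℤ)+c 2, (c 2:ℤ), (c 0:ℤ), (c 0:ℤ), (c 1:ℤ), (c 0:ℤ)+c 1, (c 2:ℤ), (c 0:ℤ)+c 1+c 2] := by
  funext j
  fin_cases j <;>
    simp [g, Fin.sum_univ_three, Matrix.vecHead, Matrix.vecTail, v5, v6, v7, v8] <;> ring

set_option maxHeartbeats 800000 in
lemma eqh0 (P : Fin 18 → ℤ) (hrel : ∑ i, P i • e i = 0) : P 17 = P 0 := by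
  have hj := congrFun hrel 0
  rw [Finset.sum_apply] at hj
  simp only [Pi.smul_apply, smul_eq_mul, Pi.zero_apply] at hj
  rw [sum18] at hj
  simp only [show e 0 0 = (-1) from rfl, show e 1 0 = (0) from rfl, show e 2 0 = (0) from rfl, show e 3 0 = (0) from rfl, show e 4 0 = (0) from rfl, show e 5 0 = (0) from rfl, show e 6 0 = (0) from rfl, show e 7 0 = (0) from rfl, show e 8 0 = (0) from rfl, show e 9 0 = (0) from rfl, show e 10 0 = (0) from rfl, show e 11 0 = (0) from rfl, show e 12 0 = (0) from rfl, show e 13 0 = (0) from rfl, show e 14 0 = (0) from rfl, show e 15 0 = (0) from rfl, show e 16 0 = (0) from rfl, show e 17 0 = (1) from rfl, mul_zero, mul_one, mul_neg_one, add_zero, zero_add] at hj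
  omega

set_option maxHeartbeats 800000 in
lemma eqh1 (P : Fin 18 → ℤ) (hrel : ∑ i, P i • e i = 0) : P 15 + P 16 = P 0 := by
  have hj := congrFun hrel 1
  rw [Finset.sum_apply] at hj
  simp only [Pi.smul_apply, smul_eq_mul, Pi.zero_apply] at hj
  rw [sum18] at hj
  simp only [show e 0 1 = (-1) from rfl, show e 1 1 = (0) from rfl, show e 2 1 = (0) from rfl, show e 3 1 = (0) from rfl, show e 4 1 = (0) from rfl, show e 5 1 = (0) from rfl, show e 6 1 = (0) from rfl, show e 7 1 = (0) from rfl, show e 8 1 = (0) from rfl, show e 9 1 = (0) from rfl, show e 10 1 = (0) from rfl, show e 11 1 = (0) from rfl, show e 12 1 = (0) from rfl, show e 13 1 = (0) from rfl, show e 14 1 = (0) from rfl, show e 15 1 = (1) from rfl, show e 16 1 = (1) from rfl, show e 17 1 = (0) from rfl, mul_zero, mul_one, mul_neg_one, add_zero, zero_add] at hj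
  omega

set_option maxHeartbeats 800000 in
lemma eqh2 (P : Fin 18 → ℤ) (hrel : ∑ i, P i • e i = 0) : P 13 + P 14 + P 16 = P 0 := by
  have hj := congrFun hrel 2
  rw [Finset.sum_apply] at hj
  simp only [Pi.smul_apply, smul_eq_mul, Pi.zero_apply] at hj
  rw [sum18] at hj
  simp only [show e 0 2 = (-1) from rfl, show e 1 2 = (0) from rfl, show e 2 2 = (0) from rfl, show e 3 2 = (0) from rfl, show e 4 2 = (0) from rfl, show e 5 2 = (0) from rfl, show e 6 2 = (0) from rfl, show e 7 2 = (0) from rfl, show e 8 2 = (0) from rfl, show e 9 2 = (0) from rfl, show e 10 2 = (0) from rfl, show e 11 2 = (0) from rfl, show e 12 2 = (0) from rfl, show e 13 2 = (1) from rfl, show e 14 2 = (1) from rfl, show e 15 2 = (0) from rfl, show e 16 2 = (1) from rfl, show e 17 2 = (0) from rfl, mul_zero, mul_one, mul_neg_one, add_zero, zero_add] at hj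
  omega

set_option maxHeartbeats 800000 in
lemma eqh3 (P : Fin 18 → ℤ) (hrel : ∑ i, P i • e i = 0) : P 12 + P 14 + P 16 = P 0 := by
  have hj := congrFun hrel 3
  rw [Finset.sum_apply] at hj
  simp only [Pi.smul_apply, smul_eq_mul, Pi.zero_apply] at hj
  rw [sum18] at hj
  simp only [show e 0 3 = (-1) from rfl, show e 1 3 = (0) from rfl, show e 2 3 = (0) from rfl, show e 3 3 = (0) from rfl, show e 4 3 = (0) from rfl, show e 5 3 = (0) from rfl, show e 6 3 = (0) from rfl, show e 7 3 = (0) from rfl, show e 8 3 = (0) from rfl, show e 9 3 = (0) from rfl, show e 10 3 = (0) from rfl, show e 11 3 = (0) from rfl, show e 12 3 = (1) from rfl, show e 13 3 = (0) from rfl, show e 14 3 = (1) from rfl, show e 15 3 = (0) from rfl, show e 16 3 = (1) from rfl, show e 17 3 = (0) from rfl, mul_zero, mul_one, mul_neg_one, add_zero, zero_add] at hj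
  omega

set_option maxHeartbeats 800000 in
lemma eqh4 (P : Fin 18 → ℤ) (hrel : ∑ i, P i • e i = 0) : P 11 + P 15 = P 0 := by
  have hj := congrFun hrel 4
  rw [Finset.sum_apply] at hj
  simp only [Pi.smul_apply, smul_eq_mul, Pi.zero_apply] at hj
  rw [sum18] at hj
  simp only [show e 0 4 = (-1) from rfl, show e 1 4 = (0) from rfl, show e 2 4 = (0) from rfl, show e 3 4 = (0) from rfl, show e 4 4 = (0) from rfl, show e 5 4 = (0) from rfl, show e 6 4 = (0) from rfl, show e 7 4 = (0) from rfl, show e 8 4 = (0) from rfl, show e 9 4 = (0) from rfl, show e 10 4 = (0) from rfl, show e 11 4 = (1) from rfl, show e 12 4 = (0) from rfl, show e 13 4 = (0) from rfl, show e 14 4 = (0) from rfl, show e 15 4 = (1) from rfl, show e 16 4 = (0) from rfl, show e 17 4 = (0) from rfl, mul_zero, mul_one, mul_neg_one, add_zero, zero_add] at hj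
  omega

set_option maxHeartbeats 800000 in
lemma eqh5 (P : Fin 18 → ℤ) (hrel : ∑ i, P i • e i = 0) : P 10 + P 13 = P 0 := by
  have hj := congrFun hrel 5
  rw [Finset.sum_apply] at hj
  simp only [Pi.smul_apply, smul_eq_mul, Pi.zero_apply] at hj
  rw [sum18] at hj
  simp only [show e 0 5 = (-1) from rfl, show e 1 5 = (0) from rfl, show e 2 5 = (0) from rfl, show e 3 5 = (0) from rfl, show e 4 5 = (0) from rfl, show e 5 5 = (0) from rfl, show e 6 5 = (0) from rfl, show e 7 5 = (0) from rfl, show e 8 5 = (0) from rfl, show e 9 5 = (0) from rfl, show e 10 5 = (1) from rfl, show e 11 5 = (0) from rfl, show e 12 5 = (0) from rfl, show e 13 5 = (1) from rfl, show e 14 5 = (0) from rfl, show e 15 5 = (0) from rfl, show e 16 5 = (0) from rfl, show e 17 5 = (0) from rfl, mul_zero, mul_one, mul_neg_one, add_zero, zero_add] at hj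
  omega

set_option maxHeartbeats 800000 in
lemma eqh6 (P : Fin 18 → ℤ) (hrel : ∑ i, P i • e i = 0) : P 9 = P 0 := by
  have hj := congrFun hrel 6
  rw [Finset.sum_apply] at hj
  simp only [Pi.smul_apply, smul_eq_mul, Pi.zero_apply] at hj
  rw [sum18] at hj
  simp only [show e 0 6 = (-1) from rfl, show e 1 6 = (0) from rfl, show e 2 6 = (0) from rfl, show e 3 6 = (0) from rfl, show e 4 6 = (0) from rfl, show e 5 6 = (0) from rfl, show e 6 6 = (0) from rfl, show e 7 6 = (0) from rfl, show e 8 6 = (0) from rfl, show e 9 6 = (1) from rfl, show e 10 6 = (0) from rfl, show e 11 6 = (0) from rfl, show e 12 6 = (0) from rfl, show e 13 6 = (0) from rfl, show e 14 6 = (0) from rfl, show e 15 6 = (0) from rfl, show e 16 6 = (0) from rfl, show e 17 6 = (0) from rfl, mul_zero, mul_one, mul_neg_one, add_zero, zero_add] at hj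
  omega

set_option maxHeartbeats 800000 in
lemma eqh7 (P : Fin 18 → ℤ) (hrel : ∑ i, P i • e i = 0) : P 8 = P 0 := by
  have hj := congrFun hrel 7
  rw [Finset.sum_apply] at hj
  simp only [Pi.smul_apply, smul_eq_mul, Pi.zero_apply] at hj
  rw [sum18] at hj
  simp only [show e 0 7 = (-1) from rfl, show e 1 7 = (0) from rfl, show e 2 7 = (0) from rfl, show e 3 7 = (0) from rfl, show e 4 7 = (0) from rfl, show e 5 7 = (0) from rfl, show e 6 7 = (0) from rfl, show e 7 7 = (0) from rfl, show e 8 7 = (1) from rfl, show e 9 7 = (0) from rfl, show e 10 7 = (0) from rfl, show e 11 7 = (0) from rfl, show e 12 7 = (0) from rfl, show e 13 7 = (0) from rfl, show e 14 7 = (0) from rfl, show e 15 7 = (0) from rfl, show e 16 7 = (0) from rfl, show e 17 7 = (0) from rfl, mul_zero, mul_one, mul_neg_one, add_zero, zero_add] at hj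
  omega

set_option maxHeartbeats 800000 in
lemma eqh8 (P : Fin 18 → ℤ) (hrel : ∑ i, P i • e i = 0) : P 6 + P 7 = P 0 := by
  have hj := congrFun hrel 8
  rw [Finset.sum_apply] at hj
  simp only [Pi.smul_apply, smul_eq_mul, Pi.zero_apply] at hj
  rw [sum18] at hj
  simp only [show e 0 8 = (-1) from rfl, show e 1 8 = (0) from rfl, show e 2 8 = (0) from rfl, show e 3 8 = (0) from rfl, show e 4 8 = (0) from rfl, show e 5 8 = (0) from rfl, show e 6 8 = (1) from rfl, show e 7 8 = (1) from rfl, show e 8 8 = (0) from rfl, show e 9 8 = (0) from rfl, show e 10 8 = (0) from rfl, show e 11 8 = (0) from rfl, show e 12 8 = (0) from rfl, show e 13 8 = (0) from rfl, show e 14 8 = (0) from rfl, show e 15 8 = (0) from rfl, show e 16 8 = (0) from rfl, show e 17 8 = (0) from rfl, mul_zero, mul_one, mul_neg_one, add_zero, zero_add] at hj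
  omega

set_option maxHeartbeats 800000 in
lemma eqh9 (P : Fin 18 → ℤ) (hrel : ∑ i, P i • e i = 0) : P 4 + P 5 + P 7 = P 0 := by
  have hj := congrFun hrel 9
  rw [Finset.sum_apply] at hj
  simp only [Pi.smul_apply, smul_eq_mul, Pi.zero_apply] at hj
  rw [sum18] at hj
  simp only [show e 0 9 = (-1) from rfl, show e 1 9 = (0) from rfl, show e 2 9 = (0) from rfl, show e 3 9 = (0) from rfl, show e 4 9 = (1) from rfl, show e 5 9 = (1) from rfl, show e 6 9 = (0) from rfl, show e 7 9 = (1) from rfl, show e 8 9 = (0) from rfl, show e 9 9 = (0) from rfl, show e 10 9 = (0) from rfl, show e 11 9 = (0) from rfl, show e 12 9 = (0) from rfl, show e 13 9 = (0) from rfl, show e 14 9 = (0) from rfl, show e 15 9 = (0) from rfl, show e 16 9 = (0) from rfl, show e 17 9 = (0) from rfl, mul_zero, mul_one, mul_neg_one, add_zero, zero_add] at hj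
  omega

set_option maxHeartbeats 800000 in
lemma eqh10 (P : Fin 18 → ℤ) (hrel : ∑ i, P i • e i = 0) : P 3 + P 5 + P 7 = P 0 := by
  have hj := congrFun hrel 10
  rw [Finset.sum_apply] at hj
  simp only [Pi.smul_apply, smul_eq_mul, Pi.zero_apply] at hj
  rw [sum18] at hj
  simp only [show e 0 10 = (-1) from rfl, show e 1 10 = (0) from rfl, show e 2 10 = (0) from rfl, show e 3 10 = (1) from rfl, show e 4 10 = (0) from rfl, show e 5 10 = (1) from rfl, show e 6 10 = (0) from rfl, show e 7 10 = (1) from rfl, show e 8 10 = (0) from rfl, show e 9 10 = (0) from rfl, show e 10 10 = (0) from rfl, show e 11 10 = (0) from rfl, show e 12 10 = (0) from rfl, show e 13 10 = (0) from rfl, show e 14 10 = (0) from rfl, show e 15 10 = (0) from rfl, show e 16 10 = (0) from rfl, show e 17 10 = (0) from rfl, mul_zero, mul_one, mul_neg_one, add_zero, zero_add] at hj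
  omega

set_option maxHeartbeats 800000 in
lemma eqh11 (P : Fin 18 → ℤ) (hrel : ∑ i, P i • e i = 0) : P 2 + P 6 = P 0 := by
  have hj := congrFun hrel 11
  rw [Finset.sum_apply] at hj
  simp only [Pi.smul_apply, smul_eq_mul, Pi.zero_apply] at hj
  rw [sum18] at hj
  simp only [show e 0 11 = (-1) from rfl, show e 1 11 = (0) from rfl, show e 2 11 = (1) from rfl, show e 3 11 = (0) from rfl, show e 4 11 = (0) from rfl, show e 5 11 = (0) from rfl, show e 6 11 = (1) from rfl, show e 7 11 = (0) from rfl, show e 8 11 = (0) from rfl, show e 9 11 = (0) from rfl, show e 10 11 = (0) from rfl, show e 11 11 = (0) from rfl, show e 12 11 = (0) from rfl, show e 13 11 = (0) from rfl, show e 14 11 = (0) from rfl, show e 15 11 = (0) from rfl, show e 16 11 = (0) from rfl, show e 17 11 = (0) from rfl, mul_zero, mul_one, mul_neg_one, add_zero, zero_add] at hj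
  omega

set_option maxHeartbeats 800000 in
lemma eqh12 (P : Fin 18 → ℤ) (hrel : ∑ i, P i • e i = 0) : P 1 + P 4 = P 0 := by
  have hj := congrFun hrel 12
  rw [Finset.sum_apply] at hj
  simp only [Pi.smul_apply, smul_eq_mul, Pi.zero_apply] at hj
  rw [sum18] at hj
  simp only [show e 0 12 = (-1) from rfl, show e 1 12 = (1) from rfl, show e 2 12 = (0) from rfl, show e 3 12 = (0) from rfl, show e 4 12 = (1) from rfl, show e 5 12 = (0) from rfl, show e 6 12 = (0) from rfl, show e 7 12 = (0) from rfl, show e 8 12 = (0) from rfl, show e 9 12 = (0) from rfl, show e 10 12 = (0) from rfl, show e 11 12 = (0) from rfl, show e 12 12 = (0) from rfl, show e 13 12 = (0) from rfl, show e 14 12 = (0) from rfl, show e 15 12 = (0) from rfl, show e 16 12 = (0) from rfl, show e 17 12 = (0) from rfl, mul_zero, mul_one, mul_neg_one, add_zero, zero_add] at hj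
  omega

set_option maxHeartbeats 2000000 in
/-- Every element of `L(B₂₅) ⊂ ℤ^18 = ℤ^9 × ℤ^9` can be written uniquely as
`(k g₁ + l g₂ + m g₃, n g₁ + o g₂ + p g₃)` with `k + l + m = n + o + p`. -/
theorem unique_representation_LB25 (P : Fin 18 → ℤ)
    (hnonneg : ∀ i, 0 ≤ P i) (hrel : ∑ i, P i • e i = 0) :
    ∃! t : (Fin 3 → ℕ) × (Fin 3 → ℕ),
      t.1 0 + t.1 1 + t.1 2 = t.2 0 + t.2 1 + t.2 2 ∧
      P = Fin.append (∑ i, (t.1 i : ℤ) • g i) (∑ i, (t.2 i : ℤ) • g i) := by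
  have h0 : P 17 = P 0 := eqh0 P hrel
  have h1 : P 15 + P 16 = P 0 := eqh1 P hrel
  have h2 : P 13 + P 14 + P 16 = P 0 := eqh2 P hrel
  have h3 : P 12 + P 14 + P 16 = P 0 := eqh3 P hrel
  have h4 : P 11 + P 15 = P 0 := eqh4 P hrel
  have h5 : P 10 + P 13 = P 0 := eqh5 P hrel
  have h6 : P 9 = P 0 := eqh6 P hrel
  have h7 : P 8 = P 0 := eqh7 P hrel
  have h8 : P 6 + P 7 = P 0 := eqh8 P hrel
  have h9 : P 4 + P 5 + P 7 = P 0 := eqh9 P hrel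
  have h10 : P 3 + P 5 + P 7 = P 0 := eqh10 P hrel
  have h11 : P 2 + P 6 = P 0 := eqh11 P hrel
  have h12 : P 1 + P 4 = P 0 := eqh12 P hrel
  obtain ⟨q0, hq0⟩ := Int.eq_ofNat_of_zero_le (hnonneg 0)
  obtain ⟨q1, hq1⟩ := Int.eq_ofNat_of_zero_le (hnonneg 1)
  obtain ⟨q2, hq2⟩ := Int.eq_ofNat_of_zero_le (hnonneg 2)
  obtain ⟨q3, hq3⟩ := Int.eq_ofNat_of_zero_le (hnonneg 3)
  obtain ⟨q4, hq4⟩ := Int.eq_ofNat_of_zero_le (hnonneg 4)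
  obtain ⟨q5, hq5⟩ := Int.eq_ofNat_of_zero_le (hnonneg 5)
  obtain ⟨q6, hq6⟩ := Int.eq_ofNat_of_zero_le (hnonneg 6)
  obtain ⟨q7, hq7⟩ := Int.eq_ofNat_of_zero_le (hnonneg 7)
  obtain ⟨q8, hq8⟩ := Int.eq_ofNat_of_zero_le (hnonneg 8)
  obtain ⟨q9, hq9⟩ := Int.eq_ofNat_of_zero_le (hnonneg 9)
  obtain ⟨q10, hq10⟩ := Int.eq_ofNat_of_zero_le (hnonneg 10)
  obtain ⟨q11, hq11⟩ := Int.eq_ofNat_of_zero_le (hnonneg 11)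
  obtain ⟨q12, hq12⟩ := Int.eq_ofNat_of_zero_le (hnonneg 12)
  obtain ⟨q13, hq13⟩ := Int.eq_ofNat_of_zero_le (hnonneg 13)
  obtain ⟨q14, hq14⟩ := Int.eq_ofNat_of_zero_le (hnonneg 14)
  obtain ⟨q15, hq15⟩ := Int.eq_ofNat_of_zero_le (hnonneg 15)
  obtain ⟨q16, hq16⟩ := Int.eq_ofNat_of_zero_le (hnonneg 16)
  obtain ⟨q17, hq17⟩ := Int.eq_ofNat_of_zero_le (hnonneg 17)
  simp only [hq0, hq1, hq2, hq3, hq4, hq5, hq6, hq7, hq8, hq9, hq10, hq11, hq12, hq13, hq14, hq15, hq16, hq17] at h0 h1 h2 h3 h4 h5 h6 h7 h8 h9 h10 h11 h12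
  have n0 : q17 = q0 := by exact_mod_cast h0
  have n1 : q15 + q16 = q0 := by exact_mod_cast h1
  have n2 : q13 + q14 + q16 = q0 := by exact_mod_cast h2
  have n3 : q12 + q14 + q16 = q0 := by exact_mod_cast h3
  have n4 : q11 + q15 = q0 := by exact_mod_cast h4
  have n5 : q10 + q13 = q0 := by exact_mod_cast h5
  have n6 : q9 = q0 := by exact_mod_cast h6
  have n7 : q8 = q0 := by exact_mod_cast h7
  have n8 : q6 + q7 = q0 := by exact_mod_cast h8
  have n9 : q4 + q5 + q7 = q0 := by exact_mod_cast h9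
  have n10 : q3 + q5 + q7 = q0 := by exact_mod_cast h10
  have n11 : q2 + q6 = q0 := by exact_mod_cast h11
  have n12 : q1 + q4 = q0 := by exact_mod_cast h12
  have m0 : q0 = q3 + q5 + q2 := by omega
  have m1 : q1 = q5 + q2 := by omega
  have m2 : q2 = q2 := by omega
  have m3 : q3 = q3 := by omega
  have m4 : q4 = q3 := by omega
  have m5 : q5 = q5 := by omega
  have m6 : q6 = q3 + q5 := by omega
  have m7 : q7 = q2 := by omega
  have m8 : q8 = q3 + q5 + q2 := by omega
  have m9 : q9 = q12 + q14 + q11 := by omega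
  have m10 : q10 = q14 + q11 := by omega
  have m11 : q11 = q11 := by omega
  have m12 : q12 = q12 := by omega
  have m13 : q13 = q12 := by omega
  have m14 : q14 = q14 := by omega
  have m15 : q15 = q12 + q14 := by omega
  have m16 : q16 = q11 := by omega
  have m17 : q17 = q12 + q14 + q11 := by omega
  have c0 : P 0 = (↑q3 : ℤ) + (↑q5 : ℤ) + (↑q2 : ℤ) := by rw [hq0]; exact_mod_cast m0
  have c1 : P 1 = (↑q5 : ℤ) + (↑q2 : ℤ) := by rw [hq1]; exact_mod_cast m1
  have c2 : P 2 = (↑q2 : ℤ) := hq2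
  have c3 : P 3 = (↑q3 : ℤ) := hq3
  have c4 : P 4 = (↑q3 : ℤ) := by rw [hq4]; exact_mod_cast m4
  have c5 : P 5 = (↑q5 : ℤ) := hq5
  have c6 : P 6 = (↑q3 : ℤ) + (↑q5 : ℤ) := by rw [hq6]; exact_mod_cast m6
  have c7 : P 7 = (↑q2 : ℤ) := by rw [hq7]; exact_mod_cast m7
  have c8 : P 8 = (↑q3 : ℤ) + (↑q5 : ℤ) + (↑q2 : ℤ) := by rw [hq8]; exact_mod_cast m8
  have c9 : P 9 = (↑q12 : ℤ) + (↑q14 : ℤ) + (↑q11 : ℤ) := by rw [hq9]; exact_mod_cast m9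
  have c10 : P 10 = (↑q14 : ℤ) + (↑q11 : ℤ) := by rw [hq10]; exact_mod_cast m10
  have c11 : P 11 = (↑q11 : ℤ) := hq11
  have c12 : P 12 = (↑q12 : ℤ) := hq12
  have c13 : P 13 = (↑q12 : ℤ) := by rw [hq13]; exact_mod_cast m13
  have c14 : P 14 = (↑q14 : ℤ) := hq14
  have c15 : P 15 = (↑q12 : ℤ) + (↑q14 : ℤ) := by rw [hq15]; exact_mod_cast m15
  have c16 : P 16 = (↑q11 : ℤ) := by rw [hq16]; exact_mod_cast m16
  have c17 : P 17 = (↑q12 : ℤ) + (↑q14 : ℤ) + (↑q11 : ℤ) := by rw [hq17]; exact_mod_cast m17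
  refine ⟨(![q3, q5, q2], ![q12, q14, q11]), ⟨?_, ?_⟩, ?_⟩
  · show q3 + q5 + q2 = q12 + q14 + q11
    omega
  · rw [gsum, gsum]
    funext i
    fin_cases i
    · exact c0
    · exact c1
    · exact c2
    · exact c3
    · exact c4
    · exact c5
    · exact c6
    · exact c7
    · exact c8
    · exact c9
    · exact c10
    · exact c11
    · exact c12
    · exact c13
    · exact c14
    · exact c15
    · exact c16
    · exact c17
  · rintro ⟨c, d⟩ ⟨hsum', hP'⟩
    rw [gsum, gsum] at hP'
    have u0 : P 3 = (c 0 : ℤ) := congrFun hP' 3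
    have u1 : P 5 = (c 1 : ℤ) := congrFun hP' 5
    have u2 : P 2 = (c 2 : ℤ) := congrFun hP' 2
    have u3 : P 12 = (d 0 : ℤ) := congrFun hP' 12
    have u4 : P 14 = (d 1 : ℤ) := congrFun hP' 14
    have u5 : P 11 = (d 2 : ℤ) := congrFun hP' 11
    have w0 : c 0 = q3 := by exact_mod_cast (u0.symm.trans hq3)
    have w1 : c 1 = q5 := by exact_mod_cast (u1.symm.trans hq5)
    have w2' : c 2 = q2 := by exact_mod_cast (u2.symm.trans hq2)
    have w3 : d 0 = q12 := by exact_mod_cast (u3.symm.trans hq12)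
    have w4 : d 1 = q14 := by exact_mod_cast (u4.symm.trans hq14)
    have w5 : d 2 = q11 := by exact_mod_cast (u5.symm.trans hq11)
    refine Prod.ext ?_ ?_ <;> funext j <;> fin_cases j
    · exact w0
    · exact w1
    · exact w2'
    · exact w3
    · exact w4
    · exact w5

end Stmt15
end
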